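/- Let C be a small category with pullbacks equipped with a Grothendieck pretopology, let F be a presheaf of groupoids on C, and let sh F be the sheafification of F, i.e. the sheaf of groupoids whose presheaf of objects and presheaf of morphisms are the sheafifications of those of F. Then the canonical map F → sh F satisfies the local lifting conditions (L1), (L2), (L3), and hence induces an isomorphism on sheaves of homotopy groups. -/

import Mathlib

set_option linter.unusedSectionVars false

open CategoryTheory Opposite Limits

universe u

variable {C : Type u} [Category.{u} C] [HasPullbacks C]

section Pi0Aut

variable {F G : Cᵒᵖ ⥤ Grpd.{u, u}}

lemma grpd_map_obj_id (F : Cᵒᵖ ⥤ Grpd.{u, u}) (X : Cᵒᵖ) (a : F.obj X) :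
    (F.map (𝟙 X)).obj a = a := by rw [F.map_id]; rfl

lemma grpd_map_obj_comp (F : Cᵒᵖ ⥤ Grpd.{u, u}) {X Y Z : Cᵒᵖ} (g : X ⟶ Y) (h : Y ⟶ Z)
    (a : F.obj X) : (F.map (g ≫ h)).obj a = (F.map h).obj ((F.map g).obj a) := by
  rw [F.map_comp]; rfl

lemma res_res (F : Cᵒᵖ ⥤ Grpd.{u, u}) {V W T : C} (g : V ⟶ W) (h : W ⟶ T)
    (x : F.obj (op T)) :
    (F.map g.op).obj ((F.map h.op).obj x) = (F.map (g ≫ h).op).obj x := by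
  rw [op_comp, F.map_comp]; rfl

lemma nat_obj_eq (φ : F ⟶ G) {X Y : C} (h : Y ⟶ X) (a : F.obj (op X)) :
    (φ.app (op Y)).obj ((F.map h.op).obj a) = (G.map h.op).obj ((φ.app (op X)).obj a) :=
  congrArg (fun Φ : ↑(F.obj (op X)) ⥤ ↑(G.obj (op Y)) => Φ.obj a) (φ.naturality h.op)

/-- The presheaf `π₀F` of isomorphism classes of a presheaf of groupoids. -/
def pi0 (F : Cᵒᵖ ⥤ Grpd.{u, u}) : Cᵒᵖ ⥤ Type u where
  obj X := Quot (fun a b : F.obj X => Nonempty (a ≅ b))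
  map {X Y} g := TypeCat.ofHom (Quot.map (F.map g).obj
    (fun a b e => e.elim fun e => ⟨(F.map g).mapIso e⟩))
  map_id X := by
    ext q
    obtain ⟨a⟩ := q
    exact congrArg (Quot.mk _) (grpd_map_obj_id F X a)
  map_comp {X Y Z} g h := by
    ext q
    obtain ⟨a⟩ := q
    exact congrArg (Quot.mk _) (grpd_map_obj_comp F g h a)

/-- The map induced on `π₀` by a map of presheaves of groupoids. -/
def pi0Map (φ : F ⟶ G) : pi0 F ⟶ pi0 G where
  app X := TypeCat.ofHom (Quot.map (φ.app X).obj
    (fun a b e => e.elim fun e => ⟨(φ.app X).mapIso e⟩))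
  naturality X Y g := by
    ext q
    obtain ⟨a⟩ := q
    exact congrArg (Quot.mk _)
      (congrArg (fun Φ : ↑(F.obj X) ⥤ ↑(G.obj Y) => Φ.obj a) (φ.naturality g))

lemma aut_eq (F : Cᵒᵖ ⥤ Grpd.{u, u}) {X : C} (a : F.obj (op X)) {g g' : (Over X)ᵒᵖ}
    (h : g ⟶ g') :
    (F.map g'.unop.hom.op).obj a =
      (F.map h.unop.left.op).obj ((F.map g.unop.hom.op).obj a) := by
  rw [res_res, Over.w h.unop]

/-- The presheaf of automorphism groups `Aut_F(a)` on `C/X`, for `a ∈ F(X)` (in a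
groupoid, the endomorphisms of an object are exactly its automorphisms). -/
def autPre (F : Cᵒᵖ ⥤ Grpd.{u, u}) (X : C) (a : F.obj (op X)) : (Over X)ᵒᵖ ⥤ Type u where
  obj g := ((F.map g.unop.hom.op).obj a ⟶ (F.map g.unop.hom.op).obj a)
  map {g g'} h := TypeCat.ofHom fun e =>
    eqToHom (aut_eq F a h) ≫ (F.map h.unop.left.op).map e ≫ eqToHom (aut_eq F a h).symm
  map_id := by
    intro g
    refine ConcreteCategory.hom_ext _ _ fun e => ?_
    change eqToHom _ ≫ (F.map _).map e ≫ eqToHom _ = e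
    have h : (𝟙 g : g ⟶ g).unop.left = 𝟙 g.unop.left := rfl
    have h2 := Functor.congr_hom (show F.map ((𝟙 g : g ⟶ g).unop.left.op) = 𝟙 _ by
      rw [h, op_id, F.map_id]) e
    simp only [h2, eqToHom_trans]
    simp only [show ((𝟙 (F.obj (op g.unop.left)) : _ ⟶ _)).map e = e from rfl]
    simp
  map_comp := by
    intro g g' g'' h h'
    refine ConcreteCategory.hom_ext _ _ fun e => ?_
    change eqToHom _ ≫ (F.map _).map e ≫ eqToHom _ = eqToHom _ ≫ (F.map _).map (eqToHom _ ≫ (F.map _).map e ≫ eqToHom _) ≫ eqToHom _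
    have h2 := Functor.congr_hom (show F.map ((h ≫ h').unop.left.op)
        = F.map h.unop.left.op ≫ F.map h'.unop.left.op by
      rw [show (h ≫ h').unop.left = h'.unop.left ≫ h.unop.left from rfl, op_comp,
        F.map_comp]) e
    simp only [types_comp_apply, h2]
    rw [show ∀ {A B : ↑(F.obj (op g.unop.left))} (x : A ⟶ B),
        ((F.map h.unop.left.op ≫ F.map h'.unop.left.op)).map x
        = (F.map h'.unop.left.op).map ((F.map h.unop.left.op).map x) from fun _ => rfl]
    simp [eqToHom_map]

/-- The map induced by `φ : F ⟶ G` on automorphism presheaves. -/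
def autMap (φ : F ⟶ G) (X : C) (a : F.obj (op X)) :
    autPre F X a ⟶ autPre G X ((φ.app (op X)).obj a) where
  app g := TypeCat.ofHom fun e =>
    eqToHom (nat_obj_eq φ g.unop.hom a).symm ≫ (φ.app (op g.unop.left)).map e ≫
      eqToHom (nat_obj_eq φ g.unop.hom a)
  naturality := by
    intro g g' h
    refine ConcreteCategory.hom_ext _ _ fun e => ?_
    change eqToHom _ ≫ (φ.app _).map (eqToHom _ ≫ (F.map _).map e ≫ eqToHom _) ≫ eqToHom _ = eqToHom _ ≫ (G.map _).map (eqToHom _ ≫ (φ.app _).map e ≫ eqToHom _) ≫ eqToHom _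
    have h2 := Functor.congr_hom (φ.naturality h.unop.left.op) e
    erw [show ∀ {A B : ↑(F.obj (op g.unop.left))} (x : A ⟶ B),
        ((F.map h.unop.left.op ≫ φ.app (op g'.unop.left))).map x
        = (φ.app (op g'.unop.left)).map ((F.map h.unop.left.op).map x) from fun _ => rfl] at h2
    erw [show ∀ {A B : ↑(F.obj (op g.unop.left))} (x : A ⟶ B),
        ((φ.app (op g.unop.left) ≫ G.map h.unop.left.op)).map x
        = (G.map h.unop.left.op).map ((φ.app (op g.unop.left)).map x) from fun _ => rfl] at h2
    simp [h2, eqToHom_map]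

variable (K : Pretopology C)

/-- A map of presheaves of groupoids induces an isomorphism on sheaves of homotopy
groups if the sheafification of `π₀φ` is an isomorphism and, for every `X` and every
object `a` of `F(X)`, the sheafification of `Aut_F(a) ⟶ Aut_G(φ(a))` is an
isomorphism of sheaves on `C/X`. -/
def InducesIsoOnHomotopySheaves (φ : F ⟶ G) : Prop :=
  IsIso ((presheafToSheaf (K.toGrothendieck) (Type u)).map (pi0Map φ)) ∧
  ∀ (X : C) (a : F.obj (op X)),
    IsIso ((presheafToSheaf ((K.toGrothendieck).over X) (Type u)).map (autMap φ X a))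

/-- The local lifting conditions (L1), (L2), (L3) for a map of presheaves of
groupoids. -/
structure LocalLiftingConditions (φ : F ⟶ G) : Prop where
  obj_lift : ∀ (X : C) (b : G.obj (op X)),
    ∃ (ι : Type u) (V : ι → C) (g : ∀ i, V i ⟶ X),
      Presieve.ofArrows V g ∈ K.coverings X ∧
      ∀ i, ∃ a : F.obj (op (V i)),
        Nonempty ((φ.app (op (V i))).obj a ≅ (G.map (g i).op).obj b)
  hom_lift : ∀ (X : C) (a a' : F.obj (op X))
    (k : (φ.app (op X)).obj a ⟶ (φ.app (op X)).obj a'),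
    ∃ (ι : Type u) (V : ι → C) (g : ∀ i, V i ⟶ X),
      Presieve.ofArrows V g ∈ K.coverings X ∧
      ∀ i, ∃ h : (F.map (g i).op).obj a ⟶ (F.map (g i).op).obj a',
        (φ.app (op (V i))).map h =
          eqToHom (nat_obj_eq φ (g i) a) ≫ (G.map (g i).op).map k ≫
            eqToHom (nat_obj_eq φ (g i) a').symm
  hom_sep : ∀ (X : C) (a : F.obj (op X)) (h : a ⟶ a),
    (φ.app (op X)).map h = 𝟙 ((φ.app (op X)).obj a) →
    ∃ (ι : Type u) (V : ι → C) (g : ∀ i, V i ⟶ X),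
      Presieve.ofArrows V g ∈ K.coverings X ∧
      ∀ i, (F.map (g i).op).map h = 𝟙 ((F.map (g i).op).obj a)

end Pi0Aut

section ObMor

variable {F G : Cᵒᵖ ⥤ Grpd.{u, u}}

/-- The presheaf of objects of a presheaf of groupoids. -/
def obPresheaf (F : Cᵒᵖ ⥤ Grpd.{u, u}) : Cᵒᵖ ⥤ Type u where
  obj X := F.obj X
  map g := TypeCat.ofHom (F.map g).obj
  map_id X := by ext a; exact grpd_map_obj_id F X a
  map_comp g h := by ext a; exact grpd_map_obj_comp F g h a

lemma sigma_hom_ext {A : Type u} [Groupoid.{u} A] {a b a' b' : A} (f : a ⟶ b)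
    (g : a' ⟶ b') (ha : a = a') (hb : b = b')
    (hfg : f = eqToHom ha ≫ g ≫ eqToHom hb.symm) :
    (⟨(a, b), f⟩ : Σ ab : A × A, ab.1 ⟶ ab.2) = ⟨(a', b'), g⟩ := by
  subst ha; subst hb; simp at hfg; subst hfg; rfl

/-- The presheaf of morphisms of a presheaf of groupoids. -/
def morPresheaf (F : Cᵒᵖ ⥤ Grpd.{u, u}) : Cᵒᵖ ⥤ Type u where
  obj X := Σ ab : ↑(F.obj X) × ↑(F.obj X), ab.1 ⟶ ab.2
  map {X Y} g := TypeCat.ofHom fun m => ⟨((F.map g).obj m.1.1, (F.map g).obj m.1.2), (F.map g).map m.2⟩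
  map_id X := by
    refine ConcreteCategory.hom_ext _ _ fun m => ?_
    obtain ⟨⟨a, b⟩, f⟩ := m
    exact sigma_hom_ext _ _ (grpd_map_obj_id F X a) (grpd_map_obj_id F X b)
      (Functor.congr_hom (F.map_id X) f)
  map_comp {X Y Z} g h := by
    refine ConcreteCategory.hom_ext _ _ fun m => ?_
    obtain ⟨⟨a, b⟩, f⟩ := m
    exact sigma_hom_ext _ _ (grpd_map_obj_comp F g h a) (grpd_map_obj_comp F g h b)
      (Functor.congr_hom (F.map_comp g h) f)

/-- The map induced on presheaves of objects. -/
def obMap (φ : F ⟶ G) : obPresheaf F ⟶ obPresheaf G where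
  app X := TypeCat.ofHom (φ.app X).obj
  naturality X Y g := by
    ext a
    exact congrArg (fun Φ : ↑(F.obj X) ⥤ ↑(G.obj Y) => Φ.obj a) (φ.naturality g)

/-- The map induced on presheaves of morphisms. -/
def morMap (φ : F ⟶ G) : morPresheaf F ⟶ morPresheaf G where
  app X := TypeCat.ofHom fun m => ⟨((φ.app X).obj m.1.1, (φ.app X).obj m.1.2), (φ.app X).map m.2⟩
  naturality X Y g := by
    refine ConcreteCategory.hom_ext _ _ fun m => ?_
    obtain ⟨⟨a, b⟩, f⟩ := m
    exact sigma_hom_ext _ _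
      (congrArg (fun Φ : ↑(F.obj X) ⥤ ↑(G.obj Y) => Φ.obj a) (φ.naturality g))
      (congrArg (fun Φ : ↑(F.obj X) ⥤ ↑(G.obj Y) => Φ.obj b) (φ.naturality g))
      (Functor.congr_hom (φ.naturality g) f)

end ObMor

/-- A morphism of presheaves (of sets) exhibits its target as the sheafification of
its source if the target is a sheaf and every map to a sheaf factors uniquely
through it. -/
def IsSheafificationMap (J : GrothendieckTopology C) {P Q : Cᵒᵖ ⥤ Type u}
    (η : P ⟶ Q) : Prop :=
  Presieve.IsSheaf J Q ∧
    ∀ S : Cᵒᵖ ⥤ Type u, Presieve.IsSheaf J S →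
      ∀ χ : P ⟶ S, ∃! χ' : Q ⟶ S, η ≫ χ' = χ

section Aux

variable {F G : Cᵒᵖ ⥤ Grpd.{u, u}}

lemma sigma_hom_eq {A : Type u} [Groupoid.{u} A] {a b a' b' : A} {f : a ⟶ b} {g : a' ⟶ b'}
    (h : (⟨(a, b), f⟩ : Σ ab : A × A, ab.1 ⟶ ab.2) = ⟨(a', b'), g⟩) :
    ∃ (ha : a = a') (hb : b = b'), f = eqToHom ha ≫ g ≫ eqToHom hb.symm := by
  have ha : a = a' := congrArg (fun p : Σ ab : A × A, ab.1 ⟶ ab.2 => p.1.1) h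
  have hb : b = b' := congrArg (fun p : Σ ab : A × A, ab.1 ⟶ ab.2 => p.1.2) h
  subst ha; subst hb
  have h2 : HEq f g := (Sigma.ext_iff.mp h).2
  refine ⟨rfl, rfl, ?_⟩
  rw [eq_of_heq h2]; simp

lemma IsSheafificationMap.w {J : GrothendieckTopology C} {P Q : Cᵒᵖ ⥤ Type u} {f : P ⟶ Q}
    (h : IsSheafificationMap J f) : J.W f := by
  intro S hS
  have hS' : Presieve.IsSheaf J S := (isSheaf_iff_isSheaf_of_type J S).mp hS
  constructor
  · intro χ₁ χ₂ he
    obtain ⟨χ, hχ, hu⟩ := h.2 S hS' (f ≫ χ₁)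
    exact (hu χ₁ rfl).trans (hu χ₂ he.symm).symm
  · intro χ
    obtain ⟨χ', hχ', _⟩ := h.2 S hS' χ
    exact ⟨χ', hχ'⟩

lemma exists_cover_of_sieve (K : Pretopology C) {X : C} (T : Sieve X)
    (hT : T ∈ K.toGrothendieck X) (P : ∀ ⦃Y : C⦄, (Y ⟶ X) → Prop)
    (hP : ∀ ⦃Y : C⦄ (f : Y ⟶ X), T f → P f) :
    ∃ (ι : Type u) (V : ι → C) (g : ∀ i, V i ⟶ X),
      Presieve.ofArrows V g ∈ K.coverings X ∧ ∀ i, P (g i) := by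
  obtain ⟨R, hR, hle⟩ := hT
  refine ⟨Σ Y : C, {f : Y ⟶ X // R f}, fun i => i.1, fun i => i.2.1, ?_,
    fun i => hP _ (hle _ _ i.2.2)⟩
  have : Presieve.ofArrows (fun i : Σ Y : C, {f : Y ⟶ X // R f} => i.1)
      (fun i => i.2.1) = R := by
    funext Y
    ext f
    constructor
    · rintro ⟨i⟩
      exact i.2.2
    · intro hf
      exact Presieve.ofArrows.mk (⟨Y, f, hf⟩ : Σ Y : C, {f : Y ⟶ X // R f})
  rwa [this]

variable {J : GrothendieckTopology C} (η : F ⟶ G)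

lemma L1_sieve [Presheaf.IsLocallySurjective J (obMap η)] (X : C) (b : G.obj (op X)) :
    ∃ T : Sieve X, T ∈ J X ∧ ∀ ⦃Y : C⦄ (f : Y ⟶ X), T f →
      ∃ a : F.obj (op Y), Nonempty ((η.app (op Y)).obj a ≅ (G.map f.op).obj b) := by
  refine ⟨Presheaf.imageSieve (obMap η) b, Presheaf.imageSieve_mem J (obMap η) b, ?_⟩
  rintro Y f ⟨t, ht⟩
  refine ⟨t, ⟨eqToIso ?_⟩⟩
  exact ht

lemma L2_sieve [Presheaf.IsLocallySurjective J (morMap η)]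
    [Presheaf.IsLocallyInjective J (obMap η)]
    (X : C) (a a' : F.obj (op X)) (k : (η.app (op X)).obj a ⟶ (η.app (op X)).obj a') :
    ∃ T : Sieve X, T ∈ J X ∧ ∀ ⦃Y : C⦄ (f : Y ⟶ X), T f →
      ∃ h : (F.map f.op).obj a ⟶ (F.map f.op).obj a',
        (η.app (op Y)).map h =
          eqToHom (nat_obj_eq η f a) ≫ (G.map f.op).map k ≫
            eqToHom (nat_obj_eq η f a').symm := by
  classical
  let m : (morPresheaf G).obj (op X) := ⟨((η.app (op X)).obj a, (η.app (op X)).obj a'), k⟩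
  have hS : Presheaf.imageSieve (morMap η) m ∈ J X :=
    Presheaf.imageSieve_mem J (morMap η) m
  let R : ∀ ⦃Y : C⦄ ⦃f : Y ⟶ X⦄, (Presheaf.imageSieve (morMap η) m) f → Sieve Y :=
    fun Y f hf =>
      Presheaf.equalizerSieve (F := obPresheaf F) (X := op Y) hf.choose.1.1
        ((F.map f.op).obj a) ⊓
      Presheaf.equalizerSieve (F := obPresheaf F) (X := op Y) hf.choose.1.2
        ((F.map f.op).obj a')
  refine ⟨Sieve.bind (Sieve.arrows (Presheaf.imageSieve (morMap η) m)) R,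
    J.bind_covering hS ?_, ?_⟩
  · intro Y f hf
    obtain ⟨hc, hd, hk⟩ := sigma_hom_eq
      (show (⟨((η.app (op Y)).obj hf.choose.1.1, (η.app (op Y)).obj hf.choose.1.2),
          (η.app (op Y)).map hf.choose.2⟩ : Σ ab : ↑(G.obj (op Y)) × ↑(G.obj (op Y)),
            ab.1 ⟶ ab.2) =
        ⟨((G.map f.op).obj ((η.app (op X)).obj a),
          (G.map f.op).obj ((η.app (op X)).obj a')), (G.map f.op).map k⟩
        from hf.choose_spec)
    exact J.intersection_covering
      (Presheaf.equalizerSieve_mem J (obMap η) _ _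
        (show (η.app (op Y)).obj hf.choose.1.1 =
            (η.app (op Y)).obj ((F.map f.op).obj a) from
          hc.trans (nat_obj_eq η f a).symm))
      (Presheaf.equalizerSieve_mem J (obMap η) _ _
        (show (η.app (op Y)).obj hf.choose.1.2 =
            (η.app (op Y)).obj ((F.map f.op).obj a') from
          hd.trans (nat_obj_eq η f a').symm))
  · rintro Y g ⟨Z, g', f, hf, ⟨h1, h2⟩, rfl⟩
    obtain ⟨hc, hd, hk⟩ := sigma_hom_eq
      (show (⟨((η.app (op Z)).obj hf.choose.1.1, (η.app (op Z)).obj hf.choose.1.2),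
          (η.app (op Z)).map hf.choose.2⟩ : Σ ab : ↑(G.obj (op Z)) × ↑(G.obj (op Z)),
            ab.1 ⟶ ab.2) =
        ⟨((G.map f.op).obj ((η.app (op X)).obj a),
          (G.map f.op).obj ((η.app (op X)).obj a')), (G.map f.op).map k⟩
        from hf.choose_spec)
    have e1 : (F.map (g' ≫ f).op).obj a = (F.map g'.op).obj hf.choose.1.1 :=
      (res_res F g' f a).symm.trans
        (show (F.map g'.op).obj hf.choose.1.1 = (F.map g'.op).obj ((F.map f.op).obj a)
          from h1).symm
    have e2 : (F.map g'.op).obj hf.choose.1.2 = (F.map (g' ≫ f).op).obj a' :=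
      (show (F.map g'.op).obj hf.choose.1.2 = (F.map g'.op).obj ((F.map f.op).obj a')
        from h2).trans (res_res F g' f a')
    refine ⟨eqToHom e1 ≫ (F.map g'.op).map hf.choose.2 ≫ eqToHom e2, ?_⟩
    have hnat := Functor.congr_hom (η.naturality g'.op) hf.choose.2
    rw [show ∀ {A B : ↑(F.obj (op Z))} (x : A ⟶ B),
        ((F.map g'.op ≫ η.app (op Y))).map x = (η.app (op Y)).map ((F.map g'.op).map x)
        from fun _ => rfl] at hnat
    rw [show ∀ {A B : ↑(F.obj (op Z))} (x : A ⟶ B),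
        ((η.app (op Z) ≫ G.map g'.op)).map x = (G.map g'.op).map ((η.app (op Z)).map x)
        from fun _ => rfl] at hnat
    have hGcomp := Functor.congr_hom
      (show G.map (g' ≫ f).op = G.map f.op ≫ G.map g'.op by rw [op_comp, G.map_comp]) k
    rw [show ∀ {A B : ↑(G.obj (op X))} (x : A ⟶ B),
        ((G.map f.op ≫ G.map g'.op)).map x = (G.map g'.op).map ((G.map f.op).map x)
        from fun _ => rfl] at hGcomp
    rw [CategoryTheory.Functor.map_comp, CategoryTheory.Functor.map_comp,
      eqToHom_map, eqToHom_map, hnat, hk, hGcomp]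
    simp [eqToHom_map]

lemma L3_sieve [Presheaf.IsLocallyInjective J (morMap η)]
    (X : C) (a : F.obj (op X)) (h : a ⟶ a)
    (hh : (η.app (op X)).map h = 𝟙 ((η.app (op X)).obj a)) :
    ∃ T : Sieve X, T ∈ J X ∧ ∀ ⦃Y : C⦄ (f : Y ⟶ X), T f →
      (F.map f.op).map h = 𝟙 ((F.map f.op).obj a) := by
  have heq : (morMap η).app (op X) ⟨(a, a), h⟩ = (morMap η).app (op X) ⟨(a, a), 𝟙 a⟩ := by
    show (⟨(_, _), (η.app (op X)).map h⟩ : Σ ab : ↑(G.obj (op X)) × ↑(G.obj (op X)),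
        ab.1 ⟶ ab.2) = ⟨(_, _), (η.app (op X)).map (𝟙 a)⟩
    rw [hh, CategoryTheory.Functor.map_id]
  refine ⟨Presheaf.equalizerSieve (F := morPresheaf F) ⟨(a, a), h⟩ ⟨(a, a), 𝟙 a⟩,
    Presheaf.equalizerSieve_mem J (morMap η) _ _ heq, ?_⟩
  intro Y f hf
  obtain ⟨ha, hb, hk⟩ := sigma_hom_eq
    (show (⟨((F.map f.op).obj a, (F.map f.op).obj a), (F.map f.op).map h⟩ :
        Σ ab : ↑(F.obj (op Y)) × ↑(F.obj (op Y)), ab.1 ⟶ ab.2) =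
      ⟨((F.map f.op).obj a, (F.map f.op).obj a), (F.map f.op).map (𝟙 a)⟩ from hf)
  rw [hk, CategoryTheory.Functor.map_id]
  simp

lemma iso_equivalence (A : Type u) [Groupoid.{u, u} A] :
    Equivalence (fun a b : A => Nonempty (a ≅ b)) where
  refl a := ⟨Iso.refl a⟩
  symm := fun ⟨e⟩ => ⟨e.symm⟩
  trans := fun ⟨e⟩ ⟨e'⟩ => ⟨e.trans e'⟩

lemma pi0_exact {A : Type u} [Groupoid.{u, u} A] {a b : A}
    (h : Quot.mk (fun a b : A => Nonempty (a ≅ b)) a =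
      Quot.mk (fun a b : A => Nonempty (a ≅ b)) b) : Nonempty (a ≅ b) :=
  ((iso_equivalence A).eqvGen_iff).mp (Quot.eqvGen_exact h)

/-- In a groupoid, a morphism gives an isomorphism. -/
def homIso {A : Type u} [Groupoid.{u, u} A] {a b : A} (f : a ⟶ b) : a ≅ b :=
  ⟨f, Groupoid.inv f, Groupoid.comp_inv f, Groupoid.inv_comp f⟩

lemma pi0_locallySurjective [Presheaf.IsLocallySurjective J (obMap η)] :
    Presheaf.IsLocallySurjective J (pi0Map η) where
  imageSieve_mem {U} s := by
    obtain ⟨b⟩ := s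
    refine J.superset_covering ?_ (Presheaf.imageSieve_mem J (obMap η) b)
    rintro Y f ⟨t, ht⟩
    exact ⟨Quot.mk _ t, congrArg (Quot.mk _) ht⟩

lemma pi0_locallyInjective [Presheaf.IsLocallySurjective J (morMap η)]
    [Presheaf.IsLocallyInjective J (obMap η)] :
    Presheaf.IsLocallyInjective J (pi0Map η) where
  equalizerSieve_mem {U} x y hxy := by
    obtain ⟨a⟩ := x
    obtain ⟨a'⟩ := y
    obtain ⟨e⟩ := pi0_exact (A := ↑(G.obj U)) hxy
    obtain ⟨T, hT, hlift⟩ := L2_sieve (J := J) η U.unop a a' e.hom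
    refine J.superset_covering ?_ hT
    intro Y f hf
    obtain ⟨h, -⟩ := hlift f hf
    exact Quot.sound ⟨homIso h⟩

lemma aut_locallySurjective [Presheaf.IsLocallySurjective J (morMap η)]
    [Presheaf.IsLocallyInjective J (obMap η)] (X : C) (a : F.obj (op X)) :
    Presheaf.IsLocallySurjective (J.over X) (autMap η X a) where
  imageSieve_mem {U} s := by
    obtain ⟨T, hT, hlift⟩ := L2_sieve (J := J) η U.left ((F.map U.hom.op).obj a)
      ((F.map U.hom.op).obj a)
      (eqToHom (nat_obj_eq η U.hom a) ≫ s ≫ eqToHom (nat_obj_eq η U.hom a).symm)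
    refine (J.over X).superset_covering ?_ (J.overEquiv_symm_mem_over U T hT)
    intro W f hf
    rw [Sieve.overEquiv_symm_iff] at hf
    obtain ⟨h, hh⟩ := hlift f.left hf
    have e1 : (F.map W.hom.op).obj a = (F.map f.left.op).obj ((F.map U.hom.op).obj a) := by
      rw [res_res, Over.w f]
    refine ⟨eqToHom e1 ≫ h ≫ eqToHom e1.symm, ?_⟩
    show eqToHom (nat_obj_eq η W.hom a).symm ≫
        (η.app (op W.left)).map (eqToHom e1 ≫ h ≫ eqToHom e1.symm) ≫
        eqToHom (nat_obj_eq η W.hom a) =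
      eqToHom (aut_eq G ((η.app (op X)).obj a) f.op) ≫ (G.map f.left.op).map s ≫
        eqToHom (aut_eq G ((η.app (op X)).obj a) f.op).symm
    rw [CategoryTheory.Functor.map_comp, CategoryTheory.Functor.map_comp,
      eqToHom_map, eqToHom_map, hh]
    simp [eqToHom_map]
    erw [CategoryTheory.Functor.map_comp, eqToHom_map]
    simp

lemma aut_locallyInjective [Presheaf.IsLocallyInjective J (morMap η)]
    (X : C) (a : F.obj (op X)) :
    Presheaf.IsLocallyInjective (J.over X) (autMap η X a) where
  equalizerSieve_mem {U} s t hst := by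
    have h : eqToHom (nat_obj_eq η U.unop.hom a).symm ≫
          (η.app (op U.unop.left)).map s ≫ eqToHom (nat_obj_eq η U.unop.hom a) =
        eqToHom (nat_obj_eq η U.unop.hom a).symm ≫
          (η.app (op U.unop.left)).map t ≫ eqToHom (nat_obj_eq η U.unop.hom a) := hst
    rw [cancel_epi, cancel_mono] at h
    have hid : (η.app (op U.unop.left)).map (s ≫ Groupoid.inv t) =
        𝟙 ((η.app (op U.unop.left)).obj ((F.map U.unop.hom.op).obj a)) := by
      erw [CategoryTheory.Functor.map_comp, h, ← CategoryTheory.Functor.map_comp,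
        Groupoid.comp_inv, CategoryTheory.Functor.map_id]
    obtain ⟨T, hT, hvan⟩ := L3_sieve (J := J) η U.unop.left ((F.map U.unop.hom.op).obj a)
      (s ≫ Groupoid.inv t) hid
    refine (J.over X).superset_covering ?_ (J.overEquiv_symm_mem_over U.unop T hT)
    intro W f hf
    rw [Sieve.overEquiv_symm_iff] at hf
    have hv := hvan f.left hf
    have hst2 : (F.map f.left.op).map s = (F.map f.left.op).map t := by
      erw [CategoryTheory.Functor.map_comp] at hv
      have h3 : (F.map f.left.op).map t ≫ (F.map f.left.op).map (Groupoid.inv t) =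
          𝟙 _ := by
        erw [← CategoryTheory.Functor.map_comp, Groupoid.comp_inv,
          CategoryTheory.Functor.map_id]
      have := hv.trans h3.symm
      rwa [cancel_mono] at this
    show eqToHom (aut_eq F a f.op) ≫ (F.map f.left.op).map s ≫
        eqToHom (aut_eq F a f.op).symm =
      eqToHom (aut_eq F a f.op) ≫ (F.map f.left.op).map t ≫
        eqToHom (aut_eq F a f.op).symm
    rw [hst2]

end Aux

/-- The canonical map from a presheaf of groupoids to its sheafification (any map of
presheaves of groupoids whose maps of presheaves of objects and of morphisms are
sheafification maps) satisfies the local lifting conditions (L1), (L2), (L3), and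
hence induces an isomorphism on sheaves of homotopy groups. -/
theorem sheafification_localLifting (K : Pretopology C) {F G : Cᵒᵖ ⥤ Grpd.{u, u}}
    (η : F ⟶ G)
    (hOb : IsSheafificationMap (K.toGrothendieck) (obMap η))
    (hMor : IsSheafificationMap (K.toGrothendieck) (morMap η)) :
    LocalLiftingConditions K η ∧ InducesIsoOnHomotopySheaves K η := by
  have hWob := hOb.w
  have hWmor := hMor.w
  haveI iOb : Presheaf.IsLocallyInjective (K.toGrothendieck) (obMap η) :=
    hWob.isLocallyInjective
  haveI sOb : Presheaf.IsLocallySurjective (K.toGrothendieck) (obMap η) :=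
    hWob.isLocallySurjective
  haveI iMor : Presheaf.IsLocallyInjective (K.toGrothendieck) (morMap η) :=
    hWmor.isLocallyInjective
  haveI sMor : Presheaf.IsLocallySurjective (K.toGrothendieck) (morMap η) :=
    hWmor.isLocallySurjective
  refine ⟨⟨?_, ?_, ?_⟩, ?_, ?_⟩
  · intro X b
    obtain ⟨T, hT, hP⟩ := L1_sieve (J := K.toGrothendieck) η X b
    exact exists_cover_of_sieve K T hT _ hP
  · intro X a a' k
    obtain ⟨T, hT, hP⟩ := L2_sieve (J := K.toGrothendieck) η X a a' k
    exact exists_cover_of_sieve K T hT _ hP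
  · intro X a h hh
    obtain ⟨T, hT, hP⟩ := L3_sieve (J := K.toGrothendieck) η X a h hh
    exact exists_cover_of_sieve K T hT _ hP
  · haveI := pi0_locallySurjective (J := K.toGrothendieck) η
    haveI := pi0_locallyInjective (J := K.toGrothendieck) η
    exact ((K.toGrothendieck).W_iff _).mp
      ((K.toGrothendieck).W_of_isLocallyBijective _)
  · intro X a
    haveI := aut_locallySurjective (J := K.toGrothendieck) η X a
    haveI := aut_locallyInjective (J := K.toGrothendieck) η X a
    exact (((K.toGrothendieck).over X).W_iff _).mp
      (((K.toGrothendieck).over X).W_of_isLocallyBijective _)
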